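/- arXiv:1705.06406 — 6 statements merged into one kernel-verified Lean document; each statement's English description precedes it below -/
import Mathlib

section
/- Let V be a real vector space, let φ : V → ℝ be a sublinear function, let (Aₙ) be a decreasing sequence of nonempty convex subsets of V, let (βₙ) be a sequence of strictly positive reals, and let r > 0 satisfy r < inf_{a ∈ A₁} φ(a). Then there exists a sequence (aₙ) with aₙ ∈ Aₙ for all n, and φ(∑_{i=1}^{n} βᵢaᵢ) + β_{n+1} r < φ(∑_{i=1}^{n+1} βᵢaᵢ) for all n. -/
open Pointwise

/-- Dependent-choice style chain construction. -/
lemma exists_chain_aux {α : Type*} (P : ℕ → α → Prop) (Q : ℕ → α → α → Prop)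
    (h0 : ∃ a, P 0 a) (hstep : ∀ n a, P n a → ∃ b, P (n + 1) b ∧ Q n a b) :
    ∃ f : ℕ → α, (∀ n, P n (f n)) ∧ ∀ n, Q n (f n) (f (n + 1)) := by
  obtain ⟨f0, hf0⟩ := h0
  choose! g hg1 hg2 using hstep
  let f : ℕ → α := fun n => Nat.rec f0 (fun k x => g k x) n
  have hP : ∀ n, P n (f n) := by
    intro n
    induction n with
    | zero => exact hf0
    | succ k ih => exact hg1 k (f k) ih
  exact ⟨f, hP, fun n => hg2 n (f n) (hP n)⟩

theorem sublinear_increasing_sequence {V : Type*} [AddCommGroup V] [Module ℝ V]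
    (φ : V → ℝ)
    (hpos : ∀ (c : ℝ) (x : V), 0 ≤ c → φ (c • x) = c * φ x)
    (hsubadd : ∀ x y : V, φ (x + y) ≤ φ x + φ y)
    (A : ℕ → Set V) (hmono : Antitone A) (hne : ∀ n, (A n).Nonempty)
    (hconv : ∀ n, Convex ℝ (A n))
    (β : ℕ → ℝ) (hβ : ∀ n, 0 < β n)
    (r : ℝ) (hr : 0 < r) (hinf : r < ⨅ a : (A 0), φ (a : V)) :
    ∃ a : ℕ → V, (∀ n, a n ∈ A n) ∧
      ∀ n, φ (∑ i ∈ Finset.range (n + 1), β i • a i) + β (n + 1) * r <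
        φ (∑ i ∈ Finset.range (n + 2), β i • a i) := by
  classical
  have hφ0 : φ (0 : V) = 0 := by
    have h := hpos 0 0 le_rfl
    simpa using h
  by_cases hbdd : BddBelow (Set.range fun a : (A 0) => φ (a : V))
  swap
  · rw [Real.iInf_of_not_bddBelow hbdd] at hinf; linarith
  set m := ⨅ a : (A 0), φ (a : V) with hm_def
  have hm : ∀ x ∈ A 0, m ≤ φ x := fun x hx => ciInf_le hbdd ⟨x, hx⟩
  have hrm : r < m := hinf
  set δ := m - r with hδ_def
  have hδ : 0 < δ := by linarith
  set ρ : ℕ → ℝ := fun n => r + δ / 2 ^ n with hρ_def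
  have hρr : ∀ n, r < ρ n := by
    intro n
    have h1 : (0 : ℝ) < δ / 2 ^ n := by positivity
    simp only [hρ_def]; linarith
  set ε : ℕ → ℝ := fun n => β n * β (n + 1) * (δ / 2 ^ (n + 1)) / (β n + β (n + 1)) with hε_def
  have hεpos : ∀ n, 0 < ε n := by
    intro n
    have h1 := hβ n; have h2 := hβ (n + 1)
    have h3 : (0 : ℝ) < δ / 2 ^ (n + 1) := by positivity
    exact div_pos (mul_pos (mul_pos h1 h2) h3) (by linarith)
  set B : ℕ → ℝ := fun n => ∑ i ∈ Finset.range (n + 1), β i with hB_def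
  have hBpos : ∀ n, 0 < B n := by
    intro n
    exact Finset.sum_pos (fun i _ => hβ i) ⟨0, Finset.mem_range.mpr (Nat.succ_pos n)⟩
  have hBsucc : ∀ n, B (n + 1) = B n + β (n + 1) := by
    intro n
    simp only [hB_def]
    exact Finset.sum_range_succ β (n + 1)
  -- convexity of φ
  have hconvφ : ∀ (x y : V) (u v : ℝ), 0 ≤ u → 0 ≤ v → u + v = 1 →
      φ (u • x + v • y) ≤ u * φ x + v * φ y := by
    intro x y u v hu hv _
    calc φ (u • x + v • y) ≤ φ (u • x) + φ (v • y) := hsubadd _ _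
      _ = u * φ x + v * φ y := by rw [hpos u x hu, hpos v y hv]
  -- lower bound on scaled convex set
  have hlow : ∀ (t : ℝ), 0 ≤ t → ∀ x ∈ t • A 0, t * m ≤ φ x := by
    intro t ht x hx
    obtain ⟨c, hc, rfl⟩ := hx
    rw [hpos t c ht]
    exact mul_le_mul_of_nonneg_left (hm c hc) ht
  -- approximate minimizer picker
  have hpick : ∀ (e : ℝ), 0 < e → ∀ (S : Set V) (f : V → ℝ), S.Nonempty →
      BddBelow (f '' S) → ∃ a ∈ S, ∀ c ∈ S, f a < f c + e := by
    intro e he S f hSne hbd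
    obtain ⟨x, hxmem, hxlt⟩ := exists_lt_of_csInf_lt (hSne.image f)
      (show sInf (f '' S) < sInf (f '' S) + e by linarith)
    obtain ⟨a, haS, rfl⟩ := hxmem
    refine ⟨a, haS, fun c hc => lt_of_lt_of_le hxlt ?_⟩
    have := csInf_le hbd (Set.mem_image_of_mem f hc)
    linarith
  -- the invariant
  set P : ℕ → V × V × V → Prop := fun n t =>
    t.1 ∈ A n ∧ t.2.2 ∈ B n • A 0 ∧ t.2.2 = t.2.1 + β n • t.1 ∧
    φ t.2.1 + β n * ρ n ≤ φ t.2.2 ∧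
    (∀ c ∈ A n, φ t.2.2 < φ (t.2.1 + β n • c) + ε n) ∧ (n = 0 → t.2.1 = 0) with hP_def
  -- base case
  have hbase : ∃ t, P 0 t := by
    have hbd0 : BddBelow ((fun c => φ ((0 : V) + β 0 • c)) '' A 0) := by
      refine ⟨β 0 * m, ?_⟩
      rintro x ⟨c, hc, rfl⟩
      show β 0 * m ≤ φ ((0 : V) + β 0 • c)
      rw [zero_add, hpos (β 0) c (hβ 0).le]
      exact mul_le_mul_of_nonneg_left (hm c hc) (hβ 0).le
    obtain ⟨a0, ha0, hmin0⟩ := hpick (ε 0) (hεpos 0) (A 0)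
      (fun c => φ ((0 : V) + β 0 • c)) (hne 0) hbd0
    refine ⟨(a0, 0, 0 + β 0 • a0), ha0, ?_, rfl, ?_, hmin0, fun _ => rfl⟩
    · rw [zero_add]
      have hB0 : B 0 = β 0 := by simp [hB_def]
      rw [hB0]
      exact Set.smul_mem_smul_set ha0
    · rw [hφ0, zero_add, zero_add, hpos (β 0) a0 (hβ 0).le]
      have hρ0 : ρ 0 = m := by simp [hρ_def, hδ_def]
      rw [hρ0]
      exact mul_le_mul_of_nonneg_left (hm a0 ha0) (hβ 0).le
  -- step
  have hstep : ∀ n t, P n t → ∃ t', P (n + 1) t' ∧ t'.2.1 = t.2.2 := by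
    intro n t ht
    obtain ⟨h1, h2, h3, h4, h5, -⟩ := ht
    set p := t.2.1
    set s := t.2.2
    set b0 := β n with hb0_def
    set b1 := β (n + 1) with hb1_def
    have hb0 : 0 < b0 := hβ n
    have hb1 : 0 < b1 := hβ (n + 1)
    set γ := b0 + b1 with hγ_def
    have hγ : 0 < γ := by linarith
    -- membership of pushed-forward points
    have hmem : ∀ c ∈ A (n + 1), s + b1 • c ∈ B (n + 1) • A 0 := by
      intro c hc
      have hc0 : c ∈ A 0 := hmono (Nat.zero_le (n + 1)) hc
      have h2' : s + b1 • c ∈ B n • A 0 + b1 • A 0 :=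
        Set.add_mem_add h2 (Set.smul_mem_smul_set hc0)
      rwa [← Convex.add_smul (hconv 0) (hBpos n).le hb1.le, ← hBsucc n] at h2'
    have hbd : BddBelow ((fun c => φ (s + b1 • c)) '' A (n + 1)) := by
      refine ⟨B (n + 1) * m, ?_⟩
      rintro x ⟨c, hc, rfl⟩
      exact hlow (B (n + 1)) (hBpos (n + 1)).le _ (hmem c hc)
    obtain ⟨a', ha', hmin'⟩ := hpick (ε (n + 1)) (hεpos (n + 1)) (A (n + 1))
      (fun c => φ (s + b1 • c)) (hne (n + 1)) hbd
    -- the key inequality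
    set u := b0 / γ with hu_def
    set v := b1 / γ with hv_def
    have hu : 0 < u := div_pos hb0 hγ
    have hv : 0 < v := div_pos hb1 hγ
    have huv : u + v = 1 := by
      rw [hu_def, hv_def, ← add_div, hγ_def, div_self hγ.ne']
    set cstar := u • t.1 + v • a' with hcstar_def
    have hcstar : cstar ∈ A n :=
      hconv n h1 (hmono (Nat.le_succ n) ha') hu.le hv.le huv
    set X := s + b1 • a' with hX_def
    have hγn : γ ≠ 0 := hγ.ne'
    have hid : u • X + v • p = p + b0 • cstar := by
      rw [hX_def, h3, hcstar_def]
      match_scalars <;> simp only [hu_def, hv_def] <;> field_simp <;> try ring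
    have hcx : φ (p + b0 • cstar) ≤ u * φ X + v * φ p := by
      rw [← hid]; exact hconvφ X p u v hu.le hv.le huv
    have hq : φ s < φ (p + b0 • cstar) + ε n := h5 cstar hcstar
    have hq2 : φ s < u * φ X + v * φ p + ε n := by linarith
    set d := δ / 2 ^ (n + 1) with hd_def
    have hdpos : 0 < d := by positivity
    have hεn : ε n = b0 * b1 * d / γ := rfl
    have e1 : γ * φ s < b0 * φ X + b1 * φ p + b0 * b1 * d := by
      calc γ * φ s < γ * (u * φ X + v * φ p + ε n) := by
            exact mul_lt_mul_of_pos_left hq2 hγ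
        _ = b0 * φ X + b1 * φ p + b0 * b1 * d := by
            rw [hu_def, hv_def, hεn]
            field_simp
            try ring
    have hρd : ρ n - d = ρ (n + 1) := by
      simp only [hρ_def, hd_def]
      have : (2 : ℝ) ^ (n + 1) = 2 ^ n * 2 := pow_succ 2 n
      field_simp [this]
      ring
    have e3 : φ s + b1 * ρ (n + 1) < φ X := by
      have h4' : φ p ≤ φ s - b0 * ρ n := by linarith
      have e2 : b0 * (φ s + b1 * (ρ n - d)) < b0 * φ X := by
        have hm1 : b1 * φ p ≤ b1 * (φ s - b0 * ρ n) :=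
          mul_le_mul_of_nonneg_left h4' hb1.le
        rw [hγ_def] at e1
        nlinarith [hm1, e1]
      have := (mul_lt_mul_iff_right₀ hb0).mp e2
      rwa [hρd] at this
    refine ⟨(a', s, s + b1 • a'), ⟨ha', hmem a' ha', rfl, e3.le, hmin', by omega⟩, rfl⟩
  -- build the chain
  obtain ⟨f, hPf, hQf⟩ := exists_chain_aux P (fun _ t t' => t'.2.1 = t.2.2) hbase hstep
  have hsum : ∀ n, (f n).2.2 = ∑ i ∈ Finset.range (n + 1), β i • (f i).1 := by
    intro n
    induction n with
    | zero =>
      have h := hPf 0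
      rw [h.2.2.1, h.2.2.2.2.2 rfl, Finset.sum_range_one, zero_add]
    | succ k ih =>
      have h := hPf (k + 1)
      rw [h.2.2.1, hQf k, ih, ← Finset.sum_range_succ]
  refine ⟨fun n => (f n).1, fun n => (hPf n).1, fun n => ?_⟩
  have h := hPf (n + 1)
  have hkey := h.2.2.2.1
  rw [hQf n, hsum n] at hkey
  have hsum2 := hsum (n + 1)
  have hnn : n + 1 + 1 = n + 2 := rfl
  rw [hnn] at hsum2
  rw [hsum2] at hkey
  have : β (n + 1) * r < β (n + 1) * ρ (n + 1) :=
    mul_lt_mul_of_pos_left (hρr (n + 1)) (hβ (n + 1))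
  linarith
end

section
/- Let X be a real normed linear space, Y a finite-dimensional subspace of X*, and ε > 0. If x* ∈ X* satisfies dist(x*, Y) > ε, then there exists x in the unit sphere of X such that x*(x) > ε and y*(x) = 0 for all y* ∈ Y. -/
theorem exists_unit_vector_of_dist_gt {X : Type*} [NormedAddCommGroup X] [NormedSpace ℝ X]
    (Y : Submodule ℝ (X →L[ℝ] ℝ)) [FiniteDimensional ℝ Y] (ε : ℝ) (hε : 0 < ε)
    (x' : X →L[ℝ] ℝ) (hdist : ε < Metric.infDist x' (Y : Set (X →L[ℝ] ℝ))) :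
    ∃ x : X, ‖x‖ = 1 ∧ ε < x' x ∧ ∀ y' ∈ Y, y' x = 0 := by
  classical
  -- a finite basis of Y, viewed in the ambient space
  set n := Module.finrank ℝ ↥Y with hn
  let b : Module.Basis (Fin n) ℝ Y := haveI := Module.Free.of_divisionRing ℝ Y; Module.finBasis ℝ Y
  set bc : Fin n → (X →L[ℝ] ℝ) := fun i => (b i : X →L[ℝ] ℝ) with hbc
  have hYspan : Submodule.span ℝ (Set.range bc) = Y := by
    have h1 : Set.range bc = Y.subtype '' Set.range b := by
      ext f; simp [hbc, Set.range_comp]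
    rw [h1, ← Submodule.map_span, b.span_eq, Submodule.map_top, Submodule.range_subtype]
  -- the common kernel
  set p : Submodule ℝ X := ⨅ i, LinearMap.ker (bc i : X →ₗ[ℝ] ℝ) with hp
  have hpz : ∀ z ∈ p, ∀ y' ∈ Y, y' z = 0 := by
    intro z hz y' hy'
    rw [← hYspan] at hy'
    induction hy' using Submodule.span_induction with
    | mem f hf =>
      obtain ⟨i, rfl⟩ := hf
      simpa using (Submodule.mem_iInf _).1 hz i
    | zero => simp
    | add f g _ _ hf hg => simp [hf, hg]
    | smul c f _ hf => simp [hf]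
  -- key claim: there is z ∈ p, ‖z‖ ≤ 1, with ε < x' z
  have key : ∃ z ∈ p, ‖z‖ ≤ 1 ∧ ε < x' z := by
    by_contra hcon
    push_neg at hcon
    -- then |x'| ≤ ε on p
    have habs : ∀ z : p, |x' z| ≤ ε * ‖(z : X)‖ := by
      intro z
      rcases eq_or_ne (z : X) 0 with hz0 | hz0
      · simp [hz0]
      · have hn : (0:ℝ) < ‖(z : X)‖ := norm_pos_iff.2 hz0
        have hle : ∀ w ∈ p, ‖w‖ ≤ 1 → x' w ≤ ε := hcon
        have hw1 : ‖(z : X)‖⁻¹ • (z : X) ∈ p := Submodule.smul_mem _ _ z.2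
        have hw2 : (-(‖(z : X)‖⁻¹ • (z : X))) ∈ p := Submodule.neg_mem _ hw1
        have hnorm : ‖‖(z : X)‖⁻¹ • (z : X)‖ = 1 := by
          rw [norm_smul, norm_inv, norm_norm, inv_mul_cancel₀ hn.ne']
        have e1 := hle _ hw1 hnorm.le
        have e2 := hle _ hw2 (by rw [norm_neg, hnorm])
        rw [map_neg] at e2
        rw [map_smul, smul_eq_mul] at e1 e2
        have : |‖(z : X)‖⁻¹ * x' z| ≤ ε := abs_le.2 ⟨by linarith [e2], e1⟩
        rw [abs_mul, abs_inv, abs_norm] at this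
        calc |x' (z : X)| = ‖(z : X)‖ * (‖(z : X)‖⁻¹ * |x' (z : X)|) := by
              field_simp
          _ ≤ ‖(z : X)‖ * ε := by
              exact mul_le_mul_of_nonneg_left this hn.le
          _ = ε * ‖(z : X)‖ := mul_comm _ _
    -- Hahn–Banach extension of x' restricted to p
    set f : p →L[ℝ] ℝ := x'.comp (Submodule.subtypeL p) with hf
    have hfnorm : ‖f‖ ≤ ε := by
      refine ContinuousLinearMap.opNorm_le_bound _ hε.le fun z => ?_
      simpa [hf] using habs z
    obtain ⟨g, hgext, hgnorm⟩ := exists_extension_norm_eq p f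
    have hgε : ‖g‖ ≤ ε := hgnorm ▸ hfnorm
    -- x' - g vanishes on p
    set K : X →L[ℝ] ℝ := x' - g with hK
    have hKp : ∀ z ∈ p, K z = 0 := by
      intro z hz
      have := hgext ⟨z, hz⟩
      simp only [hK, ContinuousLinearMap.sub_apply]
      simp only [hf, ContinuousLinearMap.comp_apply, Submodule.subtypeL_apply] at this
      rw [this]; ring
    -- hence K ∈ Y by the finite-dimensional annihilator lemma
    have hKmem : (K : X →ₗ[ℝ] ℝ) ∈
        Submodule.span ℝ (Set.range fun i => ((bc i : X →L[ℝ] ℝ) : X →ₗ[ℝ] ℝ)) := by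
      apply mem_span_of_iInf_ker_le_ker
      intro z hz
      have hzp : z ∈ p := by
        rw [hp, Submodule.mem_iInf]
        intro i
        exact (Submodule.mem_iInf _).1 hz i
      exact hKp z hzp
    have hKY : K ∈ Y := by
      have hrange : (Set.range fun i => ((bc i : X →L[ℝ] ℝ) : X →ₗ[ℝ] ℝ)) =
          (ContinuousLinearMap.coeLM ℝ : (X →L[ℝ] ℝ) →ₗ[ℝ] (X →ₗ[ℝ] ℝ)) '' Set.range bc := by
        ext f; simp [Set.range_comp]
      rw [hrange, ← Submodule.map_span, hYspan] at hKmem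
      obtain ⟨y, hy, hyK⟩ := hKmem
      have : y = K := ContinuousLinearMap.coe_injective hyK
      rwa [← this]
    -- contradiction with the distance hypothesis
    have : Metric.infDist x' (Y : Set (X →L[ℝ] ℝ)) ≤ ε := by
      refine le_trans (Metric.infDist_le_dist_of_mem hKY) ?_
      rw [dist_eq_norm]
      have : x' - K = g := by rw [hK]; abel
      rw [this]
      exact hgε
    linarith
  obtain ⟨z, hzp, hz1, hzε⟩ := key
  have hz0 : z ≠ 0 := by
    intro h
    rw [h] at hzε
    simp at hzε
    linarith
  have hn : (0:ℝ) < ‖z‖ := norm_pos_iff.2 hz0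
  refine ⟨‖z‖⁻¹ • z, ?_, ?_, ?_⟩
  · rw [norm_smul, norm_inv, norm_norm, inv_mul_cancel₀ hn.ne']
  · have h1 : (1:ℝ) ≤ ‖z‖⁻¹ := (one_le_inv₀ hn).2 hz1
    have hpos : 0 < x' z := lt_trans hε hzε
    calc ε < x' z := hzε
      _ = 1 * x' z := (one_mul _).symm
      _ ≤ ‖z‖⁻¹ * x' z := mul_le_mul_of_nonneg_right h1 hpos.le
      _ = x' (‖z‖⁻¹ • z) := by rw [map_smul]; rfl
  · intro y' hy'
    rw [map_smul]
    have := hpz z hzp y' hy'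
    simp [this]
end

section
/- Every uniformly convex real Banach space is reflexive. -/
open NormedSpace

lemma helly_uniform {X : Type*} [NormedAddCommGroup X] [NormedSpace ℝ X]
    (F : StrongDual ℝ (StrongDual ℝ X)) (hF : ‖F‖ ≤ 1) {ι : Type*} [Fintype ι]
    (f : ι → StrongDual ℝ X) {η : ℝ} (hη : 0 < η) :
    ∃ x : X, ‖x‖ ≤ 1 ∧ ∀ i, |f i x - F (f i)| < η := by
  classical
  set T : X →L[ℝ] (ι → ℝ) := ContinuousLinearMap.pi f with hT
  set a : ι → ℝ := fun i => F (f i) with ha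
  set S : Set (ι → ℝ) := closure (T '' Metric.closedBall (0:X) 1) with hS
  have hSconv : Convex ℝ S :=
    ((convex_closedBall (0:X) 1).linear_image (T : X →ₗ[ℝ] (ι → ℝ))).closure
  have haS : a ∈ S := by
    by_contra haS
    obtain ⟨l, c, hl, hc⟩ := geometric_hahn_banach_closed_point hSconv isClosed_closure haS
    have hball : ∀ x : X, ‖x‖ ≤ 1 → l (T x) < c := fun x hx =>
      hl _ (subset_closure (Set.mem_image_of_mem _ (by simpa [Metric.mem_closedBall] using hx)))
    have hc0 : 0 < c := by simpa using hball 0 (by simp)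
    -- the functional l ∘ T has norm ≤ c
    set g : StrongDual ℝ X := l.comp T with hg
    have hgnorm : ‖g‖ ≤ c := by
      refine ContinuousLinearMap.opNorm_le_bound _ hc0.le (fun x => ?_)
      rcases eq_or_ne x 0 with rfl | hx0
      · simp
      · have hxn : 0 < ‖x‖ := norm_pos_iff.2 hx0
        have h1 : g (‖x‖⁻¹ • x) < c := hball _ (by
          rw [norm_smul, norm_inv, norm_norm, inv_mul_cancel₀ hxn.ne'])
        have h2 : g (‖x‖⁻¹ • (-x)) < c := hball _ (by
          rw [norm_smul, norm_inv, norm_norm, norm_neg, inv_mul_cancel₀ hxn.ne'])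
        have e1 : g (‖x‖⁻¹ • x) = ‖x‖⁻¹ * g x := by simp
        have e2 : g (‖x‖⁻¹ • (-x)) = -(‖x‖⁻¹ * g x) := by simp [mul_comm]
        rw [e1] at h1; rw [e2] at h2
        have : |‖x‖⁻¹ * g x| < c := abs_lt.2 ⟨by linarith, h1⟩
        rw [abs_mul, abs_inv, abs_norm] at this
        rw [Real.norm_eq_abs]
        calc |g x| = ‖x‖ * (‖x‖⁻¹ * |g x|) := by field_simp
        _ ≤ ‖x‖ * c := by nlinarith
        _ = c * ‖x‖ := mul_comm _ _
    -- decompose g as a finite combination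
    have hgsum : g = ∑ i, l (Pi.single i 1) • f i := by
      ext x
      have : T x = ∑ i, (f i x) • (Pi.single i (1:ℝ) : ι → ℝ) := by
        funext j
        simp [Finset.sum_apply, Pi.single_apply, hT]
      simp only [ContinuousLinearMap.coe_comp', Function.comp_apply, hg, this, map_sum, map_smul]
      simp [ContinuousLinearMap.sum_apply, mul_comm]
    have hFg : F g = l a := by
      have haexp : a = ∑ i, (F (f i)) • (Pi.single i (1:ℝ) : ι → ℝ) := by
        funext j
        simp [Finset.sum_apply, Pi.single_apply, ha]
      rw [hgsum, map_sum, haexp, map_sum]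
      simp [mul_comm]
    have h1 : F g ≤ ‖F‖ * ‖g‖ := (F.le_opNorm g).trans' (le_abs_self _)
    have : l a ≤ c := by
      calc l a = F g := hFg.symm
      _ ≤ ‖F‖ * ‖g‖ := h1
      _ ≤ 1 * c := mul_le_mul hF hgnorm (norm_nonneg _) zero_le_one
      _ = c := one_mul c
    linarith
  obtain ⟨b, hb, hdist⟩ := Metric.mem_closure_iff.1 haS η hη
  obtain ⟨x, hx, rfl⟩ := hb
  refine ⟨x, by simpa [Metric.mem_closedBall] using hx, fun i => ?_⟩
  have := (dist_le_pi_dist a (T x) i).trans_lt hdist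
  rw [Real.dist_eq] at this
  simpa [abs_sub_comm, hT, ha] using this

lemma helly_pointwise' {X : Type*} [NormedAddCommGroup X] [NormedSpace ℝ X]
    (F : StrongDual ℝ (StrongDual ℝ X)) (hF : ‖F‖ ≤ 1) {ι : Type*} [Fintype ι]
    (f : ι → StrongDual ℝ X) (η : ι → ℝ) (hη : ∀ i, 0 < η i) :
    ∃ x : X, ‖x‖ ≤ 1 ∧ ∀ i, |f i x - F (f i)| < η i := by
  obtain ⟨x, hx, hb⟩ := helly_uniform F hF (fun i => (η i)⁻¹ • f i) one_pos
  refine ⟨x, hx, fun i => ?_⟩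
  have := hb i
  have hηi := hη i
  simp only [ContinuousLinearMap.smul_apply, map_smul, smul_eq_mul, ← mul_sub, abs_mul,
    abs_inv, abs_of_pos hηi] at this
  calc |f i x - F (f i)| = η i * ((η i)⁻¹ * |f i x - F (f i)|) := by field_simp
  _ < η i * 1 := by
      apply mul_lt_mul_of_pos_left this hηi
  _ = η i := mul_one _

theorem uniformly_convex_reflexive {X : Type*} [NormedAddCommGroup X] [NormedSpace ℝ X]
    [CompleteSpace X]
    (h : ∀ ε > (0 : ℝ), ∃ δ > (0 : ℝ), ∀ x y : X,
      ‖x‖ ≤ 1 → ‖y‖ ≤ 1 → 2 - δ < ‖x + y‖ → ‖x - y‖ < ε) :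
    Function.Surjective (NormedSpace.inclusionInDoubleDual ℝ X) := by
  intro F
  rcases eq_or_ne F 0 with rfl | hF0
  · exact ⟨0, map_zero _⟩
  -- normalize
  have hFn : (0:ℝ) < ‖F‖ := lt_of_le_of_ne (norm_nonneg F) (fun hc => hF0 (F.opNorm_zero_iff.1 hc.symm))
  set G : StrongDual ℝ (StrongDual ℝ X) := ‖F‖⁻¹ • F with hG
  have hGnorm : ‖G‖ = 1 := by
    have h1 := ContinuousLinearMap.opNorm_smul_le (‖F‖⁻¹) F
    have h2 := ContinuousLinearMap.opNorm_smul_le ‖F‖ (‖F‖⁻¹ • F)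
    rw [smul_inv_smul₀ hFn.ne'] at h2
    rw [Real.norm_of_nonneg (inv_nonneg.2 hFn.le), inv_mul_cancel₀ hFn.ne'] at h1
    rw [Real.norm_of_nonneg hFn.le] at h2
    rw [hG]
    apply le_antisymm h1
    by_contra hc
    rw [not_le] at hc
    have := mul_lt_mul_of_pos_left hc hFn
    linarith
  have hGle : ‖G‖ ≤ 1 := hGnorm.le
  -- get moduli of convexity for ε = 1/(n+1)
  choose d hd hdspec using fun n : ℕ => h (1/(n+1 : ℝ)) (by positivity)
  -- choose norming functionals
  have hf : ∀ n : ℕ, ∃ f : StrongDual ℝ X, ‖f‖ ≤ 1 ∧ 1 - d n / 4 < G f := by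
    intro n
    have hr : 1 - d n / 4 < ‖G‖ := by rw [hGnorm]; linarith [hd n]
    obtain ⟨f, hf1, hf2⟩ := G.exists_lt_apply_of_lt_opNorm hr
    rcases le_or_gt 0 (G f) with hp | hp
    · exact ⟨f, hf1.le, by rwa [Real.norm_eq_abs, abs_of_nonneg hp] at hf2⟩
    · refine ⟨-f, by simpa using hf1.le, ?_⟩
      rw [Real.norm_eq_abs, abs_of_neg hp] at hf2
      simpa using hf2
  choose f hfnorm hfval using hf
  -- the approximating sequence
  have hx : ∀ n : ℕ, ∃ x : X, ‖x‖ ≤ 1 ∧ ∀ k : Fin (n+1), |f k x - G (f k)| < d k / 4 :=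
    fun n => helly_pointwise' G hGle (fun k : Fin (n+1) => f k) (fun k => d k / 4)
      (fun k => by linarith [hd (k : ℕ)])
  choose x hxnorm hxval using hx
  -- key pairing estimate
  have key : ∀ (k : ℕ) (u v : X), ‖u‖ ≤ 1 → ‖v‖ ≤ 1 →
      1 - d k / 2 < f k u → 1 - d k / 2 < f k v → ‖u - v‖ < 1/(k+1 : ℝ) := by
    intro k u v hu hv h1 h2
    apply hdspec k u v hu hv
    have : f k (u + v) ≤ ‖u + v‖ := by
      calc f k (u + v) ≤ |f k (u + v)| := le_abs_self _
      _ ≤ ‖f k‖ * ‖u + v‖ := (f k).le_opNorm _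
      _ ≤ 1 * ‖u + v‖ := mul_le_mul_of_nonneg_right (hfnorm k) (norm_nonneg _)
      _ = ‖u + v‖ := one_mul _
    have := (map_add (f k) u v) ▸ this
    linarith
  have hxk : ∀ (k n : ℕ), k ≤ n → 1 - d k / 2 < f k (x n) := by
    intro k n hkn
    have := hxval n ⟨k, Nat.lt_succ_of_le hkn⟩
    have h2 := hfval k
    simp only [Fin.val_mk] at this ⊢
    have := abs_lt.1 this
    linarith [this.1]
  have hcauchy : CauchySeq x := by
    rw [Metric.cauchySeq_iff]
    intro ε hε
    obtain ⟨k, hk⟩ := exists_nat_one_div_lt hε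
    refine ⟨k, fun m hm n hn => ?_⟩
    rw [dist_eq_norm]
    exact (key k (x m) (x n) (hxnorm m) (hxnorm n) (hxk k m hm) (hxk k n hn)).trans hk
  obtain ⟨z, hz⟩ := cauchySeq_tendsto_of_complete hcauchy
  -- show J z = G
  refine ⟨‖F‖ • z, ?_⟩
  have hJz : NormedSpace.inclusionInDoubleDual ℝ X z = G := by
    ext g
    rw [NormedSpace.dual_def]
    -- sequence adapted to g
    have hy : ∀ n : ℕ, ∃ y : X, ‖y‖ ≤ 1 ∧ ∀ k : Option (Fin (n+1)),
        |(Option.elim k g (fun j => f j)) y - G (Option.elim k g (fun j => f j))| <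
          (Option.elim k (1/(n+1:ℝ)) (fun j => d j / 4)) := by
      intro n
      exact helly_pointwise' G hGle _ _ (fun k => by
        cases k with
        | none => simp only [Option.elim]; positivity
        | some j => simpa using by linarith [hd (j : ℕ)])
    choose y hynorm hyval using hy
    have hyg : ∀ n : ℕ, |g (y n) - G g| < 1/(n+1:ℝ) := fun n => hyval n none
    have hyk : ∀ n : ℕ, 1 - d n / 2 < f n (y n) := by
      intro n
      have := hyval n (some ⟨n, Nat.lt_succ_self n⟩)
      simp only [Option.elim] at this
      have h2 := hfval n
      have := abs_lt.1 this
      linarith [this.1]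
    have hclose : ∀ n : ℕ, ‖x n - y n‖ < 1/(n+1:ℝ) := fun n =>
      key n (x n) (y n) (hxnorm n) (hynorm n) (hxk n n le_rfl) (hyk n)
    -- y n → z
    have hytend : Filter.Tendsto y Filter.atTop (nhds z) := by
      rw [tendsto_iff_dist_tendsto_zero]
      have hb : ∀ n, dist (y n) z ≤ 1/(n+1:ℝ) + dist (x n) z := by
        intro n
        calc dist (y n) z ≤ dist (y n) (x n) + dist (x n) z := dist_triangle _ _ _
        _ ≤ 1/(n+1:ℝ) + dist (x n) z := by
            rw [dist_eq_norm, ← norm_neg]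
            simp only [neg_sub]
            exact add_le_add_left (hclose n).le _
      have h0 : Filter.Tendsto (fun n : ℕ => 1/(n+1:ℝ) + dist (x n) z)
          Filter.atTop (nhds 0) := by
        have h1 : Filter.Tendsto (fun n : ℕ => 1/(n+1:ℝ)) Filter.atTop (nhds 0) :=
          tendsto_one_div_add_atTop_nhds_zero_nat
        have h2 : Filter.Tendsto (fun n => dist (x n) z) Filter.atTop (nhds 0) :=
          (tendsto_iff_dist_tendsto_zero).1 hz
        simpa using h1.add h2
      exact squeeze_zero (fun n => dist_nonneg) hb h0
    -- conclude g z = G g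
    have t1 : Filter.Tendsto (fun n => g (y n)) Filter.atTop (nhds (g z)) :=
      (g.continuous.tendsto z).comp hytend
    have t2 : Filter.Tendsto (fun n => g (y n)) Filter.atTop (nhds (G g)) := by
      rw [tendsto_iff_dist_tendsto_zero]
      refine squeeze_zero (fun n => dist_nonneg) (fun n => ?_)
        tendsto_one_div_add_atTop_nhds_zero_nat
      rw [Real.dist_eq]
      exact (hyg n).le
    exact tendsto_nhds_unique t1 t2
  rw [map_smul, hJz, hG, smul_inv_smul₀ hFn.ne']
end

section
/- Let K be a weak*-compact convex subset of the dual of a real Banach space X, let B be a boundary of K, let (xₙ) be a bounded sequence in X and x ∈ X. If b*(xₙ) → b*(x) for all b* ∈ B, then x*(xₙ) → x*(x) for all x* ∈ K. -/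
open Filter Set Finset Topology

set_option maxHeartbeats 1000000

private lemma geom_half_sum : ∀ m : ℕ, ∑ i ∈ Finset.range m, ((2:ℝ)⁻¹)^(i+1) = 1 - ((2:ℝ)⁻¹)^m := by
  intro m
  induction m with
  | zero => simp
  | succ m ih => rw [Finset.sum_range_succ, ih]; ring

private lemma simons_core {X : Type*} [NormedAddCommGroup X] [NormedSpace ℝ X] [CompleteSpace X]
    (K : Set (X →L[ℝ] ℝ)) (hKcpt : IsCompact (K : Set (WeakDual ℝ X)))
    (B : Set (X →L[ℝ] ℝ)) (hB : B ⊆ K)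
    (hbdry : ∀ x : X, ∃ b ∈ B, ∀ y ∈ K, y x ≤ b x)
    (f : X →L[ℝ] ℝ) (hf : f ∈ K)
    (e : ℕ → X) (M : ℝ) (hM : ∀ k, ‖e k‖ ≤ M)
    (ε : ℝ) (hε : 0 < ε) (hfe : ∀ k, ε ≤ f (e k))
    (h0 : ∀ b ∈ B, Filter.Tendsto (fun k => b (e k)) Filter.atTop (nhds 0)) : False := by
  classical
  have hKne : K.Nonempty := ⟨f, hf⟩
  have hM0 : 0 ≤ M := (norm_nonneg _).trans (hM 0)
  -- the sup functional
  set σ : X → ℝ := fun u => sSup ((fun h : X →L[ℝ] ℝ => h u) '' K) with hσdef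
  have bdd : ∀ u : X, BddAbove ((fun h : X →L[ℝ] ℝ => h u) '' K) := fun u =>
    (hKcpt.image (ContinuousLinearMap.apply ℝ ℝ u).continuous).bddAbove
  have hle : ∀ (u : X), ∀ g ∈ K, g u ≤ σ u := fun u g hg => le_csSup (bdd u) ⟨g, hg, rfl⟩
  have hub : ∀ (u : X) (a : ℝ), (∀ g ∈ K, g u ≤ a) → σ u ≤ a := fun u a h =>
    csSup_le (hKne.image _) (by rintro _ ⟨g, hg, rfl⟩; exact h g hg)
  have hσ0 : σ 0 = 0 := le_antisymm (hub 0 0 (fun g _ => by simp)) (by simpa using hle 0 f hf)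
  -- the sets W n
  set W : ℕ → Set X := fun n => closure (convexHull ℝ (e '' Set.Ici n)) with hWdef
  have hWsub : ∀ (n : ℕ) (C : Set X), IsClosed C → Convex ℝ C → (∀ k, n ≤ k → e k ∈ C) →
      W n ⊆ C := by
    intro n C hCc hCv h
    exact closure_minimal (convexHull_min (by rintro _ ⟨k, hk, rfl⟩; exact h k hk) hCv) hCc
  have hWconv : ∀ n, Convex ℝ (W n) := fun n => (convex_convexHull ℝ _).closure
  have hWclosed : ∀ n, IsClosed (W n) := fun n => isClosed_closure
  have hWmem : ∀ n k, n ≤ k → e k ∈ W n := fun n k hk =>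
    subset_closure (subset_convexHull ℝ _ ⟨k, hk, rfl⟩)
  have hWne : ∀ n, (W n).Nonempty := fun n => ⟨e n, hWmem n n le_rfl⟩
  have hWanti : ∀ m n : ℕ, n ≤ m → W m ⊆ W n := fun m n h =>
    closure_mono (convexHull_mono (Set.image_mono (Set.Ici_subset_Ici.2 h)))
  have hWnorm : ∀ n, ∀ w ∈ W n, ‖w‖ ≤ M := by
    intro n
    have := hWsub n (Metric.closedBall 0 M) Metric.isClosed_closedBall (convex_closedBall 0 M)
      (fun k _ => by simpa [mem_closedBall_zero_iff] using hM k)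
    intro w hw; simpa [mem_closedBall_zero_iff] using this hw
  have hWf : ∀ n, ∀ w ∈ W n, ε ≤ f w := by
    intro n
    have := hWsub n {u | ε ≤ f u} (isClosed_le continuous_const f.continuous)
      (convex_halfSpace_ge (f : X →ₗ[ℝ] ℝ).isLinear ε) (fun k _ => hfe k)
    exact fun w hw => this hw
  set δ : ℝ := ε / 8 with hδdef
  have hδpos : 0 < δ := by positivity
  -- the near-optimal choice
  have hchoice : ∀ (n : ℕ) (y : X), ∃ z ∈ W n,
      ∀ w ∈ W n, σ (y + ((2:ℝ)⁻¹)^n • z) ≤ σ (y + ((2:ℝ)⁻¹)^n • w) + δ * (((2:ℝ)⁻¹)^n)^2 := by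
    intro n y
    set A : Set ℝ := (fun w => σ (y + ((2:ℝ)⁻¹)^n • w)) '' W n with hAdef
    have hAne : A.Nonempty := (hWne n).image _
    have hAbdd : BddBelow A := by
      refine ⟨f y, ?_⟩
      rintro _ ⟨w, hw, rfl⟩
      have h1 : f (y + ((2:ℝ)⁻¹)^n • w) ≤ σ (y + ((2:ℝ)⁻¹)^n • w) := hle _ f hf
      have h2 : f (y + ((2:ℝ)⁻¹)^n • w) = f y + ((2:ℝ)⁻¹)^n * f w := by
        simp [map_add, map_smul, smul_eq_mul]
      have h3 : (0:ℝ) ≤ ((2:ℝ)⁻¹)^n * f w :=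
        mul_nonneg (by positivity) (le_trans hε.le (hWf n w hw))
      linarith
    obtain ⟨a, haA, halt⟩ := Real.lt_sInf_add_pos hAne
      (show (0:ℝ) < δ * (((2:ℝ)⁻¹)^n)^2 by positivity)
    obtain ⟨z, hzW, hz⟩ := haA
    refine ⟨z, hzW, fun w hw => ?_⟩
    have h5 : sInf A ≤ σ (y + ((2:ℝ)⁻¹)^n • w) := csInf_le hAbdd ⟨w, hw, rfl⟩
    have hz' : σ (y + ((2:ℝ)⁻¹)^n • z) = a := hz
    linarith
  choose zf hzfW hzfσ using hchoice
  -- the recursive sequence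
  obtain ⟨Y, hY0, hYs'⟩ : ∃ Y : ℕ → X, Y 0 = 0 ∧
      ∀ n, Y (n+1) = Y n + ((2:ℝ)⁻¹)^(n+1) • zf n (Y n) :=
    ⟨fun n => Nat.rec (0:X) (fun m y => y + ((2:ℝ)⁻¹)^(m+1) • zf m y) n, rfl, fun n => rfl⟩
  set z : ℕ → X := fun n => zf n (Y n) with hzdef
  have hYs : ∀ n, Y (n+1) = Y n + ((2:ℝ)⁻¹)^(n+1) • z n := hYs'
  have hzW : ∀ n, z n ∈ W n := fun n => hzfW n (Y n)
  set a : ℕ → X := fun k => ((2:ℝ)⁻¹)^(k+1) • z k with hadef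
  have hsum : Summable a := by
    apply Summable.of_norm_bounded (g := fun k => ((2:ℝ)⁻¹)^k * (2⁻¹ * M))
    · exact (summable_geometric_of_lt_one (by norm_num) (by norm_num)).mul_right _
    · intro k
      rw [hadef, norm_smul, pow_succ]
      have h1 : ‖z k‖ ≤ M := hWnorm k _ (hzW k)
      have h2 : (0:ℝ) ≤ ((2:ℝ)⁻¹)^k := by positivity
      calc ‖((2:ℝ)⁻¹^k * 2⁻¹ : ℝ)‖ * ‖z k‖ = ((2:ℝ)⁻¹)^k * (2⁻¹ * ‖z k‖) := by
            rw [Real.norm_eq_abs, abs_of_nonneg (by positivity)]; ring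
        _ ≤ ((2:ℝ)⁻¹)^k * (2⁻¹ * M) := by nlinarith
  set yL : X := ∑' k, a k with hyLdef
  have hYsum : ∀ n, Y n = ∑ k ∈ Finset.range n, a k := by
    intro n
    induction n with
    | zero => simp [hY0]
    | succ n ih => rw [Finset.sum_range_succ, hYs, ih]
  -- the tails r n
  set r : ℕ → X := fun n => (2:ℝ)^n • ∑' i, a (i + n) with hrdef
  have htail : ∀ n, Summable (fun i => a (i + n)) := fun n => (summable_nat_add_iff n).2 hsum
  have hpowinv : ∀ n : ℕ, ((2:ℝ)⁻¹)^n * (2:ℝ)^n = 1 := by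
    intro n; rw [← mul_pow]; norm_num
  have heq : ∀ n, yL = Y n + ((2:ℝ)⁻¹)^n • r n := by
    intro n
    have h1 : ∑ i ∈ Finset.range n, a i + ∑' i, a (i + n) = ∑' i, a i :=
      hsum.sum_add_tsum_nat_add n
    rw [hrdef, smul_smul, hpowinv, one_smul, hYsum, hyLdef, h1]
  -- r n ∈ W n
  have hrW : ∀ n, r n ∈ W n := by
    intro n
    set Q : ℕ → X := fun m => (1 - ((2:ℝ)⁻¹)^(m+1))⁻¹ •
      ∑ i ∈ Finset.range (m+1), ((2:ℝ)⁻¹)^(i+1) • z (i + n) with hQdef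
    have htm : ∀ m : ℕ, (0:ℝ) < 1 - ((2:ℝ)⁻¹)^(m+1) := by
      intro m
      have : ((2:ℝ)⁻¹)^(m+1) < 1 := pow_lt_one₀ (by norm_num) (by norm_num) (Nat.succ_ne_zero m)
      linarith
    have hQmem : ∀ m, Q m ∈ W n := by
      intro m
      rw [hQdef]
      simp only [Finset.smul_sum, smul_smul]
      refine (hWconv n).sum_mem
        (fun i _ => mul_nonneg (inv_nonneg.2 (htm m).le) (by positivity)) ?_
        (fun i _ => hWanti (i + n) n (Nat.le_add_left n i) (hzW (i + n)))
      rw [← Finset.mul_sum, geom_half_sum]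
      exact inv_mul_cancel₀ (ne_of_gt (htm m))
    have hQeq : ∀ m, Q m = (1 - ((2:ℝ)⁻¹)^(m+1))⁻¹ • ((2:ℝ)^n • ∑ i ∈ Finset.range (m+1), a (i + n)) := by
      intro m
      simp only [hQdef]
      congr 1
      rw [Finset.smul_sum]
      refine Finset.sum_congr rfl (fun i _ => ?_)
      simp only [hadef, smul_smul]
      have h2 : ((2:ℝ))^n * 2⁻¹ ^ (i + n + 1) = 2⁻¹ ^ (i + 1) := by
        rw [show i + n + 1 = n + (i + 1) by ring, pow_add, ← mul_assoc, ← mul_pow]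
        norm_num
      rw [h2]
    have hpartial : Tendsto (fun m => ∑ i ∈ Finset.range m, a (i + n)) atTop
        (nhds (∑' i, a (i + n))) := (htail n).hasSum.tendsto_sum_nat
    have hpartial' : Tendsto (fun m => (2:ℝ)^n • ∑ i ∈ Finset.range (m+1), a (i + n)) atTop
        (nhds (r n)) := by
      rw [hrdef]
      exact (hpartial.comp (tendsto_add_atTop_nat 1)).const_smul _
    have hcoef : Tendsto (fun m : ℕ => (1 - ((2:ℝ)⁻¹)^(m+1))⁻¹) atTop (nhds 1) := by
      have h1 : Tendsto (fun m : ℕ => ((2:ℝ)⁻¹)^(m+1)) atTop (nhds 0) := by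
        have := tendsto_pow_atTop_nhds_zero_of_lt_one (show (0:ℝ) ≤ 2⁻¹ by norm_num)
          (show (2:ℝ)⁻¹ < 1 by norm_num)
        exact this.comp (tendsto_add_atTop_nat 1)
      have h2 : Tendsto (fun m : ℕ => 1 - ((2:ℝ)⁻¹)^(m+1)) atTop (nhds 1) := by
        simpa using (tendsto_const_nhds.sub h1)
      simpa using h2.inv₀ (by norm_num)
    have hQtend : Tendsto Q atTop (nhds (r n)) := by
      have := hcoef.smul hpartial'
      rw [one_smul] at this
      refine this.congr (fun m => (hQeq m).symm)
    exact (hWclosed n).mem_of_tendsto hQtend (Filter.Eventually.of_forall hQmem)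
  -- main quantities
  set S : ℝ := σ yL with hSdef
  have hεS : ε ≤ S := by
    have h1 : yL ∈ W 0 := by
      have := heq 0
      simp only [pow_zero, one_smul, hY0, zero_add] at this
      rw [this]; exact hrW 0
    exact le_trans (hWf 0 yL h1) (hle yL f hf)
  -- near-optimality at each step
  have hstep : ∀ n, σ (Y n + ((2:ℝ)⁻¹)^n • z n) ≤ S + δ * (((2:ℝ)⁻¹)^n)^2 := by
    intro n
    have h1 := hzfσ n (Y n) (r n) (hrW n)
    rw [← heq n] at h1
    exact h1
  -- recursion bound
  have hSY : ∀ n, σ (Y (n+1)) ≤ (σ (Y n) + (S + δ * (((2:ℝ)⁻¹)^n)^2)) / 2 := by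
    intro n
    apply hub
    intro g hg
    have e1 : g (Y n) ≤ σ (Y n) := hle _ g hg
    have e2 : g (Y n) + ((2:ℝ)⁻¹)^n * g (z n) ≤ S + δ * (((2:ℝ)⁻¹)^n)^2 := by
      have := hle (Y n + ((2:ℝ)⁻¹)^n • z n) g hg
      rw [map_add, map_smul, smul_eq_mul] at this
      exact this.trans (hstep n)
    have e3 : g (Y (n+1)) = g (Y n) + ((2:ℝ)⁻¹)^n * 2⁻¹ * g (z n) := by
      rw [hYs, map_add, map_smul, smul_eq_mul, pow_succ]
    rw [e3]
    nlinarith [e1, e2]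
  -- the induction
  have hMain : ∀ n, ((2:ℝ)⁻¹)^n * (S - 2*δ*(1 - ((2:ℝ)⁻¹)^n)) ≤ S - σ (Y n) := by
    intro n
    induction n with
    | zero => simp [hY0, hσ0]
    | succ n ih =>
      have h1 := hSY n
      set p : ℝ := ((2:ℝ)⁻¹)^n with hpdef
      have hp0 : 0 < p := by positivity
      have hps : ((2:ℝ)⁻¹)^(n+1) = p * 2⁻¹ := by rw [pow_succ]
      rw [hps]
      nlinarith [ih, h1]
  -- the boundary point
  obtain ⟨b, hbB, hbsup⟩ := hbdry yL
  have hbK : b ∈ K := hB hbB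
  have hbS : b yL = S := le_antisymm (hle _ b hbK) (hub _ _ hbsup)
  have hbr : ∀ n, S - 2*δ ≤ b (r n) := by
    intro n
    have h1 : b yL = b (Y n) + ((2:ℝ)⁻¹)^n * b (r n) := by
      rw [heq n, map_add, map_smul, smul_eq_mul]
    have h2 : b (Y n) ≤ σ (Y n) := hle _ b hbK
    have h3 := hMain n
    set p : ℝ := ((2:ℝ)⁻¹)^n with hpdef
    have hp0 : 0 < p := by positivity
    have hp1 : p ≤ 1 := pow_le_one₀ (by norm_num) (by norm_num)
    -- p * b(r n) = S - b(Y n) ≥ S - σ(Y n) ≥ p (S - 2δ(1-p)) ≥ p (S - 2δ)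
    have h4 : p * (S - 2*δ) ≤ p * b (r n) := by nlinarith [hbS, h1, h2, h3, mul_nonneg (mul_nonneg hδpos.le hp0.le) hp0.le]
    exact le_of_mul_le_mul_left (by linarith [h4]) hp0
  -- contradiction
  have htend := h0 b hbB
  have hev : ∀ᶠ k in atTop, b (e k) < ε/4 := htend.eventually_lt_const (by positivity)
  obtain ⟨N, hN⟩ := eventually_atTop.1 hev
  have hbw : b (r N) ≤ ε/4 := by
    refine hWsub N {u | b u ≤ ε/4} (isClosed_le b.continuous continuous_const)
      (convex_halfSpace_le (b : X →ₗ[ℝ] ℝ).isLinear _) (fun k hk => (hN k hk).le) (hrW N)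
  have := hbr N
  rw [hδdef] at this
  linarith [hεS]

theorem rainwater_simons {X : Type*} [NormedAddCommGroup X] [NormedSpace ℝ X] [CompleteSpace X]
    (K : Set (X →L[ℝ] ℝ)) (hKconv : Convex ℝ K)
    (hKcpt : IsCompact (K : Set (WeakDual ℝ X)))
    (B : Set (X →L[ℝ] ℝ)) (hB : B ⊆ K)
    (hbdry : ∀ x : X, ∃ b ∈ B, ∀ y ∈ K, y x ≤ b x)
    (x : ℕ → X) (hbdd : ∃ M : ℝ, ∀ n, ‖x n‖ ≤ M) (x₀ : X)
    (hconv : ∀ b ∈ B, Filter.Tendsto (fun n => b (x n)) Filter.atTop (nhds (b x₀))) :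
    ∀ f ∈ K, Filter.Tendsto (fun n => f (x n)) Filter.atTop (nhds (f x₀)) := by
  intro f hf
  by_contra hnot
  obtain ⟨M, hM⟩ := hbdd
  rw [Metric.tendsto_atTop] at hnot
  push_neg at hnot
  obtain ⟨ε, hε, hfreq⟩ := hnot
  have hfreq' : ∃ᶠ n in atTop, ε ≤ |f (x n) - f x₀| := by
    rw [Filter.frequently_atTop]
    intro N
    obtain ⟨n, hn, h⟩ := hfreq N
    exact ⟨n, hn, by rwa [Real.dist_eq] at h⟩
  have hfreq2 : (∃ᶠ n in atTop, ε ≤ f (x n) - f x₀) ∨ (∃ᶠ n in atTop, ε ≤ -(f (x n) - f x₀)) := by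
    rw [← Filter.frequently_or_distrib]
    exact hfreq'.mono (fun n h => le_abs.1 h)
  rcases hfreq2 with h | h
  · obtain ⟨φ, hφ, hφP⟩ := Filter.extraction_of_frequently_atTop h
    refine simons_core K hKcpt B hB hbdry f hf (fun k => x (φ k) - x₀) (M + ‖x₀‖)
      (fun k => (norm_sub_le _ _).trans (by linarith [hM (φ k)])) ε hε
      (fun k => by simpa [map_sub] using hφP k) ?_
    intro b hb
    have h1 : Tendsto (fun k => b (x (φ k))) atTop (nhds (b x₀)) :=
      (hconv b hb).comp (hφ.tendsto_atTop)
    have h2 := h1.sub_const (b x₀)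
    rw [sub_self] at h2
    exact h2.congr (fun k => by simp [map_sub])
  · obtain ⟨φ, hφ, hφP⟩ := Filter.extraction_of_frequently_atTop h
    refine simons_core K hKcpt B hB hbdry f hf (fun k => x₀ - x (φ k)) (M + ‖x₀‖)
      (fun k => (norm_sub_le _ _).trans (by linarith [hM (φ k)])) ε hε
      (fun k => by have := hφP k; rw [map_sub]; linarith) ?_
    intro b hb
    have h1 : Tendsto (fun k => b (x (φ k))) atTop (nhds (b x₀)) :=
      (hconv b hb).comp (hφ.tendsto_atTop)
    have h2 := h1.const_sub (b x₀)
    rw [sub_self] at h2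
    exact h2.congr (fun k => by simp [map_sub])
end

section
/- Let φ : U → ℝ be a continuous convex function on a nonempty open convex subset U of a real normed linear space X. Then for every x₀ ∈ U, the subdifferential ∂φ(x₀) is nonempty. -/
theorem subdifferential_nonempty {X : Type*} [NormedAddCommGroup X] [NormedSpace ℝ X]
    (U : Set X) (hne : U.Nonempty) (hU : IsOpen U) (hUconv : Convex ℝ U)
    (φ : X → ℝ) (hconv : ConvexOn ℝ U φ) (hcont : ContinuousOn φ U)
    (x₀ : X) (hx₀ : x₀ ∈ U) :
    ∃ f : X →L[ℝ] ℝ, ∀ y ∈ U, f y - f x₀ ≤ φ y - φ x₀ := by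
  -- strict epigraph
  set S : Set (X × ℝ) := {p | p.1 ∈ U ∧ φ p.1 < p.2} with hS
  have hSopen : IsOpen S := by
    rw [isOpen_iff_mem_nhds]
    rintro ⟨y, t⟩ ⟨hyU, hyt⟩
    have hφ : ContinuousAt φ y := hcont.continuousAt (hU.mem_nhds hyU)
    have h1 : ContinuousAt (fun p : X × ℝ => p.2 - φ p.1) (y, t) :=
      continuousAt_snd.sub (hφ.comp continuousAt_fst)
    have h2 : {p : X × ℝ | 0 < p.2 - φ p.1} ∈ nhds (y, t) :=
      h1.preimage_mem_nhds (isOpen_Ioi.mem_nhds (by simpa using hyt))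
    have h3 : {p : X × ℝ | p.1 ∈ U} ∈ nhds (y, t) :=
      continuousAt_fst.preimage_mem_nhds (hU.mem_nhds hyU)
    filter_upwards [h2, h3] with p hp1 hp2
    exact ⟨hp2, by linarith [hp1]⟩
  have hSconv : Convex ℝ S := by
    rintro ⟨y₁, t₁⟩ ⟨h1U, h1t⟩ ⟨y₂, t₂⟩ ⟨h2U, h2t⟩ a b ha hb hab
    refine ⟨hUconv h1U h2U ha hb hab, ?_⟩
    have := hconv.2 h1U h2U ha hb hab
    simp only [smul_eq_mul] at *
    have h1 : a * φ y₁ ≤ a * t₁ := by nlinarith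
    have h2 : b * φ y₂ ≤ b * t₂ := by nlinarith
    rcases ha.lt_or_eq with ha' | ha'
    · calc φ (a • y₁ + b • y₂) ≤ a * φ y₁ + b * φ y₂ := this
        _ < a * t₁ + b * t₂ := by nlinarith
    · have hb1 : b = 1 := by linarith
      calc φ (a • y₁ + b • y₂) ≤ a * φ y₁ + b * φ y₂ := this
        _ < a * t₁ + b * t₂ := by rw [← ha', hb1]; simpa using h2t
  have hx₀S : ((x₀, φ x₀) : X × ℝ) ∉ S := by
    rintro ⟨-, h⟩; exact lt_irrefl _ h
  obtain ⟨f, hf⟩ := geometric_hahn_banach_open_point hSconv hSopen hx₀S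
  set g : X →L[ℝ] ℝ := f.comp (ContinuousLinearMap.inl ℝ X ℝ) with hg
  set c : ℝ := f (0, 1) with hc
  have hsplit : ∀ (y : X) (t : ℝ), f (y, t) = g y + t * c := by
    intro y t
    have : (y, t) = ((y, 0) : X × ℝ) + t • ((0, 1) : X × ℝ) := by
      simp [Prod.ext_iff]
    rw [this, map_add, map_smul]
    simp [hg, hc, mul_comm]
  have key : ∀ y ∈ U, ∀ t, φ y < t → g y + t * c < g x₀ + φ x₀ * c := by
    intro y hy t ht
    have := hf (y, t) ⟨hy, ht⟩
    rwa [hsplit, hsplit] at this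
  -- c < 0
  have hcneg : c < 0 := by
    have := key x₀ hx₀ (φ x₀ + 1) (by linarith)
    nlinarith
  -- limiting inequality
  have hineq : ∀ y ∈ U, g y + φ y * c ≤ g x₀ + φ x₀ * c := by
    intro y hy
    by_contra h
    push_neg at h
    -- pick t slightly above φ y
    set ε := (g y + φ y * c - (g x₀ + φ x₀ * c)) / (-c) with hε
    have hεpos : 0 < ε := div_pos (by linarith) (by linarith)
    have := key y hy (φ y + ε / 2) (by linarith)
    have hεc : ε * (-c) = g y + φ y * c - (g x₀ + φ x₀ * c) := by
      rw [hε, div_mul_cancel₀ _ (by linarith : (-c) ≠ 0)]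
    nlinarith
  refine ⟨(-c)⁻¹ • g, fun y hy => ?_⟩
  have h1 := hineq y hy
  have h2 : g y - g x₀ ≤ (-c) * (φ y - φ x₀) := by ring_nf; ring_nf at h1; linarith
  have h3 : (0:ℝ) < -c := by linarith
  simp only [ContinuousLinearMap.smul_apply, smul_eq_mul]
  rw [← mul_sub]
  rw [inv_mul_le_iff₀ h3]
  calc g y - g x₀ ≤ (-c) * (φ y - φ x₀) := h2
    _ = _ := by ring
end

section
/- Let X be a nontrivial real normed linear space, let x₀ ∈ X with ‖x₀‖ = 2, let x* in the unit sphere of X* satisfy x*(x₀) = 2, and let B := co(B_X ∪ {x₀, -x₀}). Then every y* ∈ X* with ‖y* - x*‖ < 1/3 attains its maximum over B at x₀, i.e., y*(b) ≤ y*(x₀) for all b ∈ B. -/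
theorem attains_max_on_renormed_ball {X : Type*} [NormedAddCommGroup X] [NormedSpace ℝ X]
    [Nontrivial X]
    (x₀ : X) (hx₀ : ‖x₀‖ = 2)
    (f : X →L[ℝ] ℝ) (hf : ‖f‖ = 1) (hfx₀ : f x₀ = 2)
    (g : X →L[ℝ] ℝ) (hg : ‖g - f‖ < 1 / 3) :
    ∀ b ∈ convexHull ℝ (Metric.closedBall (0 : X) 1 ∪ {x₀, -x₀}), g b ≤ g x₀ := by
  have hgf : ∀ x : X, |(g - f) x| ≤ ‖g - f‖ * ‖x‖ := fun x => (g - f).le_opNorm x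
  have hgx : (4:ℝ)/3 ≤ g x₀ := by
    have h1 := hgf x₀
    rw [hx₀] at h1
    have h2 : (g - f) x₀ = g x₀ - f x₀ := by simp
    have := abs_le.mp h1
    nlinarith [hg]
  intro b hb
  have key : ∀ s ∈ Metric.closedBall (0:X) 1 ∪ {x₀, -x₀}, g s ≤ g x₀ := by
    intro s hs
    rcases hs with hs | hs
    · have hns : ‖s‖ ≤ 1 := by simpa using hs
      have h1 := abs_le.mp (hgf s)
      have h2 : (g - f) s = g s - f s := by simp
      have h3 : |f s| ≤ ‖f‖ * ‖s‖ := f.le_opNorm s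
      rw [hf] at h3
      have h4 := abs_le.mp h3
      have h5 : ‖g - f‖ * ‖s‖ ≤ ‖g - f‖ * 1 :=
        mul_le_mul_of_nonneg_left hns (norm_nonneg _)
      nlinarith [hg]
    · rcases hs with rfl | hs
      · exact le_refl _
      · simp only [Set.mem_singleton_iff] at hs
        subst hs
        have : g (-x₀) = -g x₀ := map_neg g x₀
        linarith
  exact convexHull_min key (convex_halfSpace_le (g.toLinearMap.isLinear) _) hb
end
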